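/- (Unconstrained smoothing guarantee.) Let f : 2^N → ℝ be a non-negative submodular function on a finite ground set N with |N| = n, let O* ∈ argmax_{S ⊆ N} f(S), and let h, t be integers with 1 ≤ t < h < n. Then the average over all size-h subsets H of N satisfies (1/binom(n,h)) · Σ_{H ⊆ N, |H| = h} max{ F^{H,t}(S) : S ⊆ N \ H } ≥ (1 − 2h/(n − h)) · f(O*). -/

import Mathlib

open Finset

/-- A set function on a finite ground set is submodular. -/
def Submodular {α : Type*} [DecidableEq α] (f : Finset α → ℝ) : Prop :=
  ∀ A B : Finset α, f A + f B ≥ f (A ∪ B) + f (A ∩ B)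

/-- The surrogate function `F^{H,t}(S) = (1/binom(|H|,t)) · Σ_{H' ⊆ H, |H'| = t} f (S ∪ H')`. -/
noncomputable def surrogate {α : Type*} [DecidableEq α] (f : Finset α → ℝ)
    (H : Finset α) (t : ℕ) (S : Finset α) : ℝ :=
  (1 / (H.card.choose t : ℝ)) * ∑ H' ∈ H.powersetCard t, f (S ∪ H')

section Aux

variable {α : Type*} [DecidableEq α] [Fintype α]

lemma sum_erase_reindex (k : ℕ) (g : Finset α → ℝ) :
    ∑ R ∈ (univ : Finset α).powersetCard (k+1), ∑ x ∈ R, g (R.erase x)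
      = ((Fintype.card α - k : ℕ) : ℝ) * ∑ Q ∈ (univ : Finset α).powersetCard k, g Q := by
  have h1 : ∑ R ∈ (univ : Finset α).powersetCard (k+1), ∑ x ∈ R, g (R.erase x)
      = ∑ Q ∈ (univ : Finset α).powersetCard k, ∑ _x ∈ (univ \ Q), g Q := by
    rw [Finset.sum_sigma', Finset.sum_sigma']
    refine Finset.sum_nbij' (i := fun p => ⟨p.1.erase p.2, p.2⟩)
      (j := fun p => ⟨insert p.2 p.1, p.2⟩) ?_ ?_ ?_ ?_ ?_
    · rintro ⟨R, x⟩ hp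
      simp only [Finset.mem_sigma, Finset.mem_powersetCard_univ] at hp ⊢
      simp only [Finset.mem_sdiff, Finset.mem_univ, true_and]
      exact ⟨by rw [Finset.card_erase_of_mem hp.2, hp.1]; rfl, Finset.notMem_erase _ _⟩
    · rintro ⟨Q, x⟩ hp
      simp only [Finset.mem_sigma, Finset.mem_powersetCard_univ, Finset.mem_sdiff,
        Finset.mem_univ, true_and] at hp ⊢
      exact ⟨by rw [Finset.card_insert_of_notMem hp.2, hp.1], Finset.mem_insert_self _ _⟩
    · rintro ⟨R, x⟩ hp
      simp only [Finset.mem_sigma, Finset.mem_powersetCard_univ] at hp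
      simp [Finset.insert_erase hp.2]
    · rintro ⟨Q, x⟩ hp
      simp only [Finset.mem_sigma, Finset.mem_powersetCard_univ, Finset.mem_sdiff,
        Finset.mem_univ, true_and] at hp
      simp [Finset.erase_insert hp.2]
    · rintro ⟨R, x⟩ hp
      rfl
  rw [h1]
  rw [Finset.mul_sum]
  refine Finset.sum_congr rfl fun Q hQ => ?_
  rw [Finset.sum_const, Finset.card_sdiff_of_subset (Finset.subset_univ Q), Finset.card_univ,
    Finset.mem_powersetCard_univ.1 hQ, nsmul_eq_mul]


lemma key_S_ineq (g : Finset α → ℝ) (hg : Submodular g) (k : ℕ) :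
    ((k+2)*(k+1) : ℝ) * ∑ R ∈ (univ : Finset α).powersetCard (k+2), g R
      + ((Fintype.card α - (k+1) : ℕ) : ℝ) * ((Fintype.card α - k : ℕ) : ℝ)
          * ∑ Q ∈ (univ : Finset α).powersetCard k, g Q
    ≤ 2*(k+1) * ((Fintype.card α - (k+1) : ℕ) : ℝ)
        * ∑ Q ∈ (univ : Finset α).powersetCard (k+1), g Q := by
  set n := Fintype.card α
  have hpt : (0:ℝ) ≤ ∑ R ∈ (univ : Finset α).powersetCard (k+2), ∑ x ∈ R, ∑ y ∈ R.erase x,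
      (g (R.erase x) + g (R.erase y) - g R - g ((R.erase x).erase y)) := by
    refine Finset.sum_nonneg fun R hR => Finset.sum_nonneg fun x hx =>
      Finset.sum_nonneg fun y hy => ?_
    have hxy : x ≠ y := by rintro rfl; exact Finset.notMem_erase x R hy
    have hyR : y ∈ R := Finset.mem_of_mem_erase hy
    have hunion : R.erase x ∪ R.erase y = R := by
      ext z
      simp only [Finset.mem_union, Finset.mem_erase]
      constructor
      · rintro (⟨-, hz⟩ | ⟨-, hz⟩) <;> exact hz
      · intro hz
        rcases eq_or_ne z x with rfl | hzx
        · exact Or.inr ⟨hxy, hz⟩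
        · exact Or.inl ⟨hzx, hz⟩
    have hinter : R.erase x ∩ R.erase y = (R.erase x).erase y := by
      ext z
      simp only [Finset.mem_inter, Finset.mem_erase]
      tauto
    have := hg (R.erase x) (R.erase y)
    rw [hunion, hinter] at this
    linarith
  -- now compute the four pieces
  have hA1 : ∑ R ∈ (univ : Finset α).powersetCard (k+2), ∑ x ∈ R, ∑ _y ∈ R.erase x, g (R.erase x)
      = ((k+1):ℝ) * (((n - (k+1) : ℕ)) : ℝ) * ∑ Q ∈ (univ : Finset α).powersetCard (k+1), g Q := by
    have : ∀ R ∈ (univ : Finset α).powersetCard (k+2), ∀ x ∈ R,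
        ∑ _y ∈ R.erase x, g (R.erase x) = ((k+1):ℝ) * g (R.erase x) := by
      intro R hR x hx
      rw [Finset.sum_const, Finset.card_erase_of_mem hx,
        Finset.mem_powersetCard_univ.1 hR, nsmul_eq_mul]
      norm_num
    rw [Finset.sum_congr rfl fun R hR => Finset.sum_congr rfl (this R hR), ]
    simp_rw [← Finset.mul_sum]
    rw [sum_erase_reindex (k+1) g]
    ring
  have hA2 : ∑ R ∈ (univ : Finset α).powersetCard (k+2), ∑ x ∈ R, ∑ y ∈ R.erase x, g (R.erase y)
      = ((k+1):ℝ) * (((n - (k+1) : ℕ)) : ℝ) * ∑ Q ∈ (univ : Finset α).powersetCard (k+1), g Q := by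
    have step : ∀ R ∈ (univ : Finset α).powersetCard (k+2), ∑ x ∈ R, ∑ y ∈ R.erase x, g (R.erase y)
        = ((k+1):ℝ) * ∑ y ∈ R, g (R.erase y) := by
      intro R hR
      have : ∀ x ∈ R, ∑ y ∈ R.erase x, g (R.erase y)
          = (∑ y ∈ R, g (R.erase y)) - g (R.erase x) :=
        fun x hx => Finset.sum_erase_eq_sub hx
      rw [Finset.sum_congr rfl this, Finset.sum_sub_distrib, Finset.sum_const,
        Finset.mem_powersetCard_univ.1 hR, nsmul_eq_mul]
      push_cast
      ring
    rw [Finset.sum_congr rfl step]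
    simp_rw [← Finset.mul_sum]
    rw [sum_erase_reindex (k+1) g]
    ring
  have hA3 : ∑ R ∈ (univ : Finset α).powersetCard (k+2), ∑ x ∈ R, ∑ _y ∈ R.erase x, g R
      = ((k+2)*(k+1):ℝ) * ∑ R ∈ (univ : Finset α).powersetCard (k+2), g R := by
    have : ∀ R ∈ (univ : Finset α).powersetCard (k+2), ∑ x ∈ R, ∑ _y ∈ R.erase x, g R
        = ((k+2)*(k+1):ℝ) * g R := by
      intro R hR
      have hcard := Finset.mem_powersetCard_univ.1 hR
      calc ∑ x ∈ R, ∑ _y ∈ R.erase x, g R = ∑ x ∈ R, (((k+1 : ℕ)):ℝ) * g R := by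
            refine Finset.sum_congr rfl fun x hx => ?_
            rw [Finset.sum_const, Finset.card_erase_of_mem hx, hcard, nsmul_eq_mul]
            norm_num
        _ = ((k+2)*(k+1):ℝ) * g R := by
            rw [Finset.sum_const, hcard, nsmul_eq_mul]
            push_cast; ring
    rw [Finset.sum_congr rfl this, ← Finset.mul_sum]
  have hA4 : ∑ R ∈ (univ : Finset α).powersetCard (k+2), ∑ x ∈ R, ∑ y ∈ R.erase x,
        g ((R.erase x).erase y)
      = ((n - (k+1) : ℕ) : ℝ) * ((n - k : ℕ) : ℝ) * ∑ Q ∈ (univ : Finset α).powersetCard k, g Q := by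
    have := sum_erase_reindex (α := α) (k+1) (fun Q => ∑ y ∈ Q, g (Q.erase y))
    rw [this, sum_erase_reindex k g]
    ring
  have expand : ∑ R ∈ (univ : Finset α).powersetCard (k+2), ∑ x ∈ R, ∑ y ∈ R.erase x,
      (g (R.erase x) + g (R.erase y) - g R - g ((R.erase x).erase y))
      = ((k+1):ℝ) * (((n - (k+1) : ℕ)) : ℝ) * (∑ Q ∈ (univ : Finset α).powersetCard (k+1), g Q)
        + ((k+1):ℝ) * (((n - (k+1) : ℕ)) : ℝ) * (∑ Q ∈ (univ : Finset α).powersetCard (k+1), g Q)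
        - ((k+2)*(k+1):ℝ) * ∑ R ∈ (univ : Finset α).powersetCard (k+2), g R
        - ((n - (k+1) : ℕ) : ℝ) * ((n - k : ℕ) : ℝ) * ∑ Q ∈ (univ : Finset α).powersetCard k, g Q := by
    simp_rw [Finset.sum_sub_distrib, Finset.sum_add_distrib]
    rw [hA1, hA2, hA3, hA4]
  rw [expand] at hpt
  linarith

noncomputable def avg (g : Finset α → ℝ) (k : ℕ) : ℝ :=
  (((Fintype.card α).choose k : ℕ) : ℝ)⁻¹ * ∑ R ∈ (univ : Finset α).powersetCard k, g R

lemma avg_step (g : Finset α → ℝ) (hg : Submodular g) (k : ℕ)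
    (hk : k + 2 ≤ Fintype.card α) :
    avg g (k+2) + avg g k ≤ 2 * avg g (k+1) := by
  set n := Fintype.card α with hn
  set c : ℕ := (k+1) * (n-(k+1)) * n.choose (k+1) with hc
  have hnk1 : 0 < n - (k+1) := by omega
  have hC1 : 0 < n.choose (k+1) := Nat.choose_pos (by omega)
  have hC2 : 0 < n.choose (k+2) := Nat.choose_pos (by omega)
  have hC0 : 0 < n.choose k := Nat.choose_pos (by omega)
  have hcpos : (0:ℝ) < (c:ℕ) := by
    have : 0 < c := Nat.mul_pos (Nat.mul_pos (by omega) hnk1) hC1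
    exact_mod_cast this
  have h1 := Nat.choose_succ_right_eq n (k+1)
  have h0 := Nat.choose_succ_right_eq n k
  have e1 : (k+2)*(k+1) * n.choose (k+2) = c := by
    rw [show (k+2)*(k+1)*n.choose (k+2) = (k+1)*(n.choose (k+1+1)*(k+1+1)) from by ring, h1, hc]
    ring
  have e0 : (n-(k+1)) * (n-k) * n.choose k = c := by
    rw [hc, show (k+1)*(n-(k+1))*n.choose (k+1) = (n-(k+1))*(n.choose (k+0+1)*(k+0+1)) from by ring,
      h0]
    ring
  have hrec := key_S_ineq g hg k
  rw [← hn] at hrec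
  rw [← mul_le_mul_iff_right₀ hcpos]
  have ea2 : (c:ℝ) * avg g (k+2)
      = (((k:ℝ)+2)*((k:ℝ)+1)) * ∑ R ∈ (univ : Finset α).powersetCard (k+2), g R := by
    unfold avg
    rw [← hn]
    rw [← mul_assoc]
    congr 1
    rw [eq_comm, ← e1]
    have hne : ((n.choose (k+2):ℕ):ℝ) ≠ 0 := by positivity
    field_simp
    push_cast; ring
  have ea0 : (c:ℝ) * avg g k
      = (((n-(k+1):ℕ)):ℝ) * (((n-k:ℕ)):ℝ) * ∑ R ∈ (univ : Finset α).powersetCard k, g R := by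
    unfold avg
    rw [← hn, ← mul_assoc]
    congr 1
    rw [eq_comm, ← e0]
    have hne : ((n.choose k:ℕ):ℝ) ≠ 0 := by positivity
    field_simp
    push_cast; ring
  have ea1 : (c:ℝ) * avg g (k+1)
      = (((k:ℝ)+1) * (((n-(k+1):ℕ)):ℝ)) * ∑ R ∈ (univ : Finset α).powersetCard (k+1), g R := by
    unfold avg
    rw [← hn, ← mul_assoc]
    congr 1
    have hne : ((n.choose (k+1):ℕ):ℝ) ≠ 0 := by positivity
    rw [hc]
    field_simp
    push_cast; ring
  calc (c:ℝ) * (avg g (k+2) + avg g k) = (c:ℝ) * avg g (k+2) + (c:ℝ) * avg g k := by ring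
    _ ≤ 2 * ((c:ℝ) * avg g (k+1)) := by rw [ea2, ea0, ea1]; linarith [hrec]
    _ = (c:ℝ) * (2 * avg g (k+1)) := by ring

lemma avg_nonneg (g : Finset α → ℝ) (hg0 : ∀ S, 0 ≤ g S) (k : ℕ) : 0 ≤ avg g k := by
  unfold avg
  have : (0:ℝ) ≤ (((Fintype.card α).choose k : ℕ) : ℝ)⁻¹ := by positivity
  exact mul_nonneg this (Finset.sum_nonneg fun R _ => hg0 R)

lemma avg_zero (g : Finset α → ℝ) : avg g 0 = g ∅ := by
  unfold avg
  simp

lemma avg_ge (g : Finset α → ℝ) (hg : Submodular g) (hg0 : ∀ S, 0 ≤ g S) (k : ℕ)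
    (hk : k ≤ Fintype.card α) (hn0 : 0 < Fintype.card α) :
    (1 - (k:ℝ)/(Fintype.card α : ℝ)) * g ∅ ≤ avg g k := by
  set n := Fintype.card α with hn
  rcases Nat.eq_zero_or_pos k with rfl | hk1
  · rw [avg_zero]
    simp
  -- d is antitone
  set d : ℕ → ℝ := fun i => avg g (i+1) - avg g i with hd
  have hanti : ∀ i j, i ≤ j → j + 1 ≤ n → d j ≤ d i := by
    intro i j hij hjn
    induction j with
    | zero => cases Nat.le_zero.1 hij; rfl
    | succ m ih =>
      rcases Nat.lt_or_ge i (m+1) with hlt | hge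
      · have hstep : d (m+1) ≤ d m := by
          have := avg_step g hg m (by omega)
          simp only [hd]
          linarith
        exact le_trans hstep (ih (by omega) (by omega))
      · have : i = m + 1 := by omega
        subst this; rfl
  have htel : ∀ m, avg g m - avg g 0 = ∑ i ∈ Finset.range m, d i := by
    intro m
    rw [hd, Finset.sum_range_sub (f := avg g)]
  have hlow : (k:ℝ) * d (k-1) ≤ avg g k - avg g 0 := by
    rw [htel k]
    calc (k:ℝ) * d (k-1) = ∑ _i ∈ Finset.range k, d (k-1) := by
          rw [Finset.sum_const, Finset.card_range, nsmul_eq_mul]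
      _ ≤ ∑ i ∈ Finset.range k, d i := by
          refine Finset.sum_le_sum fun i hi => ?_
          have hi' := Finset.mem_range.1 hi
          exact hanti i (k-1) (by omega) (by omega)
  have hsplit : avg g n - avg g 0 = (avg g k - avg g 0) + ∑ i ∈ Finset.Ico k n, d i := by
    rw [htel n, htel k, Finset.range_eq_Ico, Finset.range_eq_Ico]
    exact (Finset.sum_Ico_consecutive d (Nat.zero_le k) hk).symm
  have hup : ∑ i ∈ Finset.Ico k n, d i ≤ ((n-k:ℕ):ℝ) * d (k-1) := by
    calc ∑ i ∈ Finset.Ico k n, d i ≤ ∑ _i ∈ Finset.Ico k n, d (k-1) := by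
          refine Finset.sum_le_sum fun i hi => ?_
          have hi' := Finset.mem_Ico.1 hi
          exact hanti (k-1) i (by omega) (by omega)
      _ = ((n-k:ℕ):ℝ) * d (k-1) := by
          rw [Finset.sum_const, Nat.card_Ico, nsmul_eq_mul]
  have han : 0 ≤ avg g n := avg_nonneg g hg0 n
  have ha0 : avg g 0 = g ∅ := avg_zero g
  have hcast : ((n-k:ℕ):ℝ) = (n:ℝ) - (k:ℝ) := by
    push_cast [Nat.cast_sub hk]
    ring
  have hnr : (0:ℝ) < (n:ℝ) := by exact_mod_cast hn0
  have hkr : (0:ℝ) ≤ (k:ℝ) := by positivity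
  have hkn : (k:ℝ) ≤ (n:ℝ) := by exact_mod_cast hk
  rw [hcast] at hup
  set A := avg g k
  set A0 := g ∅
  set An := avg g n
  set D := d (k-1)
  rw [ha0] at hlow hsplit
  -- key polynomial inequality
  have key : ((n:ℝ) - (k:ℝ)) * A0 ≤ (n:ℝ) * A := by
    nlinarith [mul_le_mul_of_nonneg_left hlow (by linarith : (0:ℝ) ≤ (n:ℝ) - (k:ℝ)),
      mul_le_mul_of_nonneg_left (le_trans (le_of_eq hsplit)
        (by linarith : (A - A0) + ∑ i ∈ Finset.Ico k n, d i ≤ (A - A0) + ((n:ℝ)-(k:ℝ))*D)) hkr]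
  rw [show (1 - (k:ℝ)/(n:ℝ)) * A0 = (((n:ℝ)-(k:ℝ)) * A0) / (n:ℝ) from by field_simp]
  rw [div_le_iff₀ hnr]
  nlinarith [key]

lemma pair_reindex (h t : ℕ) (htth : t ≤ h) (G : Finset α → Finset α → ℝ) :
    ∑ H ∈ (univ : Finset α).powersetCard h, ∑ H' ∈ H.powersetCard t, G H' (H \ H')
      = ∑ H' ∈ (univ : Finset α).powersetCard t,
          ∑ K ∈ (univ \ H').powersetCard (h-t), G H' K := by
  rw [Finset.sum_sigma', Finset.sum_sigma']
  refine Finset.sum_nbij' (i := fun p => ⟨p.2, p.1 \ p.2⟩) (j := fun p => ⟨p.1 ∪ p.2, p.1⟩)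
    ?_ ?_ ?_ ?_ ?_
  · rintro ⟨H, H'⟩ hp
    simp only [Finset.mem_sigma, Finset.mem_powersetCard] at hp ⊢
    refine ⟨⟨Finset.subset_univ _, hp.2.2⟩, fun z hz => ?_, ?_⟩
    · simp only [Finset.mem_sdiff, Finset.mem_univ, true_and]
      exact (Finset.mem_sdiff.1 hz).2
    · rw [Finset.card_sdiff_of_subset hp.2.1, hp.1.2, hp.2.2]
  · rintro ⟨H', K⟩ hp
    simp only [Finset.mem_sigma, Finset.mem_powersetCard] at hp ⊢
    have hdisj : Disjoint H' K := by
      refine Finset.disjoint_left.2 fun z hz1 hz2 => ?_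
      exact (Finset.mem_sdiff.1 (hp.2.1 hz2)).2 hz1
    refine ⟨⟨Finset.subset_univ _, ?_⟩, Finset.subset_union_left, hp.1.2⟩
    rw [Finset.card_union_of_disjoint hdisj, hp.1.2, hp.2.2]
    omega
  · rintro ⟨H, H'⟩ hp
    simp only [Finset.mem_sigma, Finset.mem_powersetCard] at hp
    simp [Finset.union_sdiff_of_subset hp.2.1]
  · rintro ⟨H', K⟩ hp
    simp only [Finset.mem_sigma, Finset.mem_powersetCard] at hp
    have hdisj : Disjoint H' K := by
      refine Finset.disjoint_left.2 fun z hz1 hz2 => ?_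
      exact (Finset.mem_sdiff.1 (hp.2.1 hz2)).2 hz1
    simp [Finset.union_sdiff_cancel_left hdisj]
  · rintro ⟨H, H'⟩ hp
    rfl

lemma swap_reindex (a b : ℕ) (G : Finset α → Finset α → ℝ) :
    ∑ A ∈ (univ : Finset α).powersetCard a, ∑ B ∈ (univ \ A).powersetCard b, G A B
      = ∑ B ∈ (univ : Finset α).powersetCard b, ∑ A ∈ (univ \ B).powersetCard a, G A B := by
  rw [Finset.sum_sigma', Finset.sum_sigma']
  refine Finset.sum_nbij' (i := fun p => ⟨p.2, p.1⟩) (j := fun p => ⟨p.2, p.1⟩) ?_ ?_ ?_ ?_ ?_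
  · rintro ⟨A, B⟩ hp
    simp only [Finset.mem_sigma, Finset.mem_powersetCard] at hp ⊢
    refine ⟨⟨Finset.subset_univ _, hp.2.2⟩, fun z hz => ?_, hp.1.2⟩
    simp only [Finset.mem_sdiff, Finset.mem_univ, true_and]
    intro hzB
    exact (Finset.mem_sdiff.1 (hp.2.1 hzB)).2 hz
  · rintro ⟨B, A⟩ hp
    simp only [Finset.mem_sigma, Finset.mem_powersetCard] at hp ⊢
    refine ⟨⟨Finset.subset_univ _, hp.2.2⟩, fun z hz => ?_, hp.1.2⟩
    simp only [Finset.mem_sdiff, Finset.mem_univ, true_and]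
    intro hzB
    exact (Finset.mem_sdiff.1 (hp.2.1 hzB)).2 hz
  · rintro ⟨A, B⟩ _; rfl
  · rintro ⟨B, A⟩ _; rfl
  · rintro ⟨A, B⟩ _; rfl


end Aux

set_option maxHeartbeats 2000000 in
theorem unconstrained_smoothing {α : Type*} [DecidableEq α] [Fintype α]
    (n : ℕ) (hn : Fintype.card α = n)
    (f : Finset α → ℝ) (hf0 : ∀ S : Finset α, 0 ≤ f S) (hf : Submodular f)
    (Ostar : Finset α) (hOmax : ∀ S : Finset α, f S ≤ f Ostar)
    (h t : ℕ) (ht1 : 1 ≤ t) (hth : t < h) (hhn : h < n) :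
    (1 / (n.choose h : ℝ)) * ∑ H ∈ (Finset.univ : Finset α).powersetCard h,
        sSup {y : ℝ | ∃ S : Finset α, S ⊆ Finset.univ \ H ∧ y = surrogate f H t S} ≥
      (1 - 2 * (h : ℝ) / ((n : ℝ) - (h : ℝ))) * f Ostar := by
  subst hn
  set n := Fintype.card α with hn
  rw [ge_iff_le]
  have hn0 : 0 < n := by omega
  have hnr : (0:ℝ) < (n:ℝ) := by exact_mod_cast hn0
  have hB1 : (0:ℝ) < (n.choose h : ℝ) := by exact_mod_cast Nat.choose_pos hhn.le
  have hB2 : (0:ℝ) < (h.choose t : ℝ) := by exact_mod_cast Nat.choose_pos hth.le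
  have hCt : (0:ℝ) < (n.choose t : ℝ) := by exact_mod_cast Nat.choose_pos (by omega)
  have hCht : (0:ℝ) < (n.choose (h-t) : ℝ) := by exact_mod_cast Nat.choose_pos (by omega)
  -- the two auxiliary submodular functions
  have hg1 : Submodular (fun X : Finset α => f (Ostar ∪ X)) := by
    intro A B
    have hu : (Ostar ∪ A) ∪ (Ostar ∪ B) = Ostar ∪ (A ∪ B) := by
      ext z; simp only [Finset.mem_union]; tauto
    have hi : (Ostar ∪ A) ∩ (Ostar ∪ B) = Ostar ∪ (A ∩ B) := by
      ext z; simp only [Finset.mem_union, Finset.mem_inter]; tauto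
    have := hf (Ostar ∪ A) (Ostar ∪ B)
    rw [hu, hi] at this
    exact this
  have hg2 : Submodular (fun X : Finset α => f (Ostar \ X)) := by
    intro A B
    have hu : (Ostar \ A) ∪ (Ostar \ B) = Ostar \ (A ∩ B) := by
      ext z; simp only [Finset.mem_union, Finset.mem_sdiff, Finset.mem_inter]; tauto
    have hi : (Ostar \ A) ∩ (Ostar \ B) = Ostar \ (A ∪ B) := by
      ext z; simp only [Finset.mem_union, Finset.mem_sdiff, Finset.mem_inter]; tauto
    have := hf (Ostar \ A) (Ostar \ B)
    rw [hu, hi] at this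
    simp only [ge_iff_le] at this ⊢
    linarith
  have hA1 := avg_ge (fun X : Finset α => f (Ostar ∪ X)) hg1 (fun S => hf0 _) t (by omega) hn0
  have hA2 := avg_ge (fun X : Finset α => f (Ostar \ X)) hg2 (fun S => hf0 _) (h-t) (by omega) hn0
  unfold avg at hA1 hA2
  simp only [Finset.union_empty, Finset.sdiff_empty] at hA1 hA2
  rw [← hn] at hA1 hA2
  -- binomial identities
  have I1 : n.choose h * h.choose t = n.choose t * (n-t).choose (h-t) :=
    Nat.choose_mul hth.le
  have I2 : n.choose h * h.choose t = n.choose (h-t) * (n-(h-t)).choose t := by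
    have hsym : h.choose (h-t) = h.choose t := Nat.choose_symm hth.le
    have := Nat.choose_mul (n := n) (k := h) (s := h-t) (Nat.sub_le _ _)
    rw [hsym, Nat.sub_sub_self hth.le] at this
    exact this
  have I1' : (n.choose h : ℝ) * (h.choose t : ℝ) = (n.choose t : ℝ) * ((n-t).choose (h-t) : ℝ) := by
    exact_mod_cast I1
  have I2' : (n.choose h : ℝ) * (h.choose t : ℝ)
      = (n.choose (h-t) : ℝ) * ((n-(h-t)).choose t : ℝ) := by
    exact_mod_cast I2
  -- reindexed sums
  have hP1 : ∑ H ∈ (univ : Finset α).powersetCard h, ∑ H' ∈ H.powersetCard t, f (Ostar ∪ H')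
      = (((n-t).choose (h-t) : ℕ) : ℝ)
          * ∑ H' ∈ (univ : Finset α).powersetCard t, f (Ostar ∪ H') := by
    rw [pair_reindex h t hth.le (fun H' _K => f (Ostar ∪ H')), Finset.mul_sum]
    refine Finset.sum_congr rfl fun H' hH' => ?_
    rw [Finset.sum_const, Finset.card_powersetCard, Finset.card_sdiff_of_subset (Finset.subset_univ _),
      Finset.card_univ, Finset.mem_powersetCard_univ.1 hH', nsmul_eq_mul, ← hn]
  have hP2 : ∑ H ∈ (univ : Finset α).powersetCard h, ∑ H' ∈ H.powersetCard t, f (Ostar \ (H \ H'))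
      = (((n-(h-t)).choose t : ℕ) : ℝ)
          * ∑ K ∈ (univ : Finset α).powersetCard (h-t), f (Ostar \ K) := by
    rw [pair_reindex h t hth.le (fun _H' K => f (Ostar \ K)),
      swap_reindex t (h-t) (fun _H' K => f (Ostar \ K)), Finset.mul_sum]
    refine Finset.sum_congr rfl fun K hK => ?_
    rw [Finset.sum_const, Finset.card_powersetCard, Finset.card_sdiff_of_subset (Finset.subset_univ _),
      Finset.card_univ, Finset.mem_powersetCard_univ.1 hK, nsmul_eq_mul, ← hn]
  have hP3 : ∑ H ∈ (univ : Finset α).powersetCard h, ∑ _H' ∈ H.powersetCard t, f Ostar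
      = (n.choose h : ℝ) * ((h.choose t : ℝ) * f Ostar) := by
    have : ∀ H ∈ (univ : Finset α).powersetCard h,
        ∑ _H' ∈ H.powersetCard t, f Ostar = (h.choose t : ℝ) * f Ostar := by
      intro H hH
      rw [Finset.sum_const, Finset.card_powersetCard, Finset.mem_powersetCard_univ.1 hH,
        nsmul_eq_mul]
    rw [Finset.sum_congr rfl this, Finset.sum_const, Finset.card_powersetCard, Finset.card_univ,
      ← hn, nsmul_eq_mul]
  -- scalar identities
  have k1 : (1/(n.choose h : ℝ)) * (1/(h.choose t : ℝ)) * (((n-t).choose (h-t) : ℕ) : ℝ)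
      = (n.choose t : ℝ)⁻¹ := by
    field_simp
    linear_combination (-1:ℝ) * I1'
  have k2 : (1/(n.choose h : ℝ)) * (1/(h.choose t : ℝ)) * (((n-(h-t)).choose t : ℕ) : ℝ)
      = (n.choose (h-t) : ℝ)⁻¹ := by
    field_simp
    linear_combination (-1:ℝ) * I2'
  -- the central equality
  have EQ : (1/(n.choose h : ℝ)) * ∑ H ∈ (univ : Finset α).powersetCard h,
        ((1/(h.choose t : ℝ)) * ∑ H' ∈ H.powersetCard t,
          (f (Ostar ∪ H') + f (Ostar \ (H \ H')) - f Ostar))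
      = (n.choose t : ℝ)⁻¹ * (∑ H' ∈ (univ : Finset α).powersetCard t, f (Ostar ∪ H'))
        + (n.choose (h-t) : ℝ)⁻¹ * (∑ K ∈ (univ : Finset α).powersetCard (h-t), f (Ostar \ K))
        - f Ostar := by
    rw [← Finset.mul_sum]
    simp only [Finset.sum_add_distrib, Finset.sum_sub_distrib]
    rw [hP1, hP2, hP3]
    rw [← k1, ← k2]
    have e1 : (1/(n.choose h : ℝ)) * (n.choose h : ℝ) = 1 := by field_simp
    have e2 : (1/(h.choose t : ℝ)) * (h.choose t : ℝ) = 1 := by field_simp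
    field_simp
  -- pointwise submodular bound
  have ptw : ∀ H ∈ (univ : Finset α).powersetCard h, ∀ H' ∈ H.powersetCard t,
      f (Ostar ∪ H') + f (Ostar \ (H \ H')) - f Ostar ≤ f ((Ostar \ H) ∪ H') := by
    intro H hH H' hH'
    have hsub := (Finset.mem_powersetCard.1 hH').1
    have hu : ((Ostar \ H) ∪ H') ∪ Ostar = Ostar ∪ H' := by
      ext z; simp only [Finset.mem_union, Finset.mem_sdiff]; tauto
    have hi : ((Ostar \ H) ∪ H') ∩ Ostar = Ostar \ (H \ H') := by
      ext z
      simp only [Finset.mem_union, Finset.mem_sdiff, Finset.mem_inter]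
      constructor
      · rintro ⟨(⟨hzO, hzH⟩ | hzH'), hzO'⟩
        · exact ⟨hzO', fun hc => absurd hc.1 hzH⟩
        · exact ⟨hzO', fun hc => hc.2 hzH'⟩
      · rintro ⟨hzO, hz⟩
        by_cases hzH : z ∈ H
        · exact ⟨Or.inr (by_contra fun hc => hz ⟨hzH, hc⟩), hzO⟩
        · exact ⟨Or.inl ⟨hzO, hzH⟩, hzO⟩
    have := hf ((Ostar \ H) ∪ H') Ostar
    rw [hu, hi] at this
    simp only [ge_iff_le] at this
    linarith
  -- sSup bounds
  have hsup : ∀ H ∈ (univ : Finset α).powersetCard h, surrogate f H t (Ostar \ H)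
      ≤ sSup {y : ℝ | ∃ S : Finset α, S ⊆ univ \ H ∧ y = surrogate f H t S} := by
    intro H hH
    have hmem : surrogate f H t (Ostar \ H)
        ∈ {y : ℝ | ∃ S : Finset α, S ⊆ univ \ H ∧ y = surrogate f H t S} :=
      ⟨Ostar \ H, Finset.sdiff_subset_sdiff (Finset.subset_univ _) le_rfl, rfl⟩
    have hfin : {y : ℝ | ∃ S : Finset α, S ⊆ univ \ H ∧ y = surrogate f H t S}.Finite := by
      refine Set.Finite.subset (Set.finite_range (fun S : Finset α => surrogate f H t S)) ?_
      rintro y ⟨S, hS, rfl⟩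
      exact ⟨S, rfl⟩
    exact le_csSup hfin.bddAbove hmem
  -- surrogate rewrite
  have hsurr : ∀ H ∈ (univ : Finset α).powersetCard h, surrogate f H t (Ostar \ H)
      = (1/(h.choose t : ℝ)) * ∑ H' ∈ H.powersetCard t, f ((Ostar \ H) ∪ H') := by
    intro H hH
    unfold surrogate
    rw [Finset.mem_powersetCard_univ.1 hH]
  -- cast fact
  have hcast : ((h-t : ℕ) : ℝ) = (h : ℝ) - (t : ℝ) := by
    have := Nat.cast_sub hth.le (R := ℝ)
    exact_mod_cast this
  have hfO : 0 ≤ f Ostar := hf0 Ostar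
  -- main chain
  calc (1 - 2 * (h : ℝ) / ((n : ℝ) - (h : ℝ))) * f Ostar
      ≤ (1 - (h:ℝ)/(n:ℝ)) * f Ostar := by
        refine mul_le_mul_of_nonneg_right ?_ hfO
        have hnh : (0:ℝ) < (n:ℝ) - (h:ℝ) := by
          have : (h:ℝ) < (n:ℝ) := by exact_mod_cast hhn
          linarith
        have : (h:ℝ)/(n:ℝ) ≤ 2*(h:ℝ)/((n:ℝ)-(h:ℝ)) := by
          rw [div_le_div_iff₀ hnr hnh]
          have h0 : (0:ℝ) ≤ (h:ℝ) := by positivity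
          nlinarith
        linarith
    _ ≤ (n.choose t : ℝ)⁻¹ * (∑ H' ∈ (univ : Finset α).powersetCard t, f (Ostar ∪ H'))
        + (n.choose (h-t) : ℝ)⁻¹ * (∑ K ∈ (univ : Finset α).powersetCard (h-t), f (Ostar \ K))
        - f Ostar := by
        have harith : (1 - (h:ℝ)/(n:ℝ)) * f Ostar
            = (1 - (t:ℝ)/(n:ℝ)) * f Ostar + (1 - ((h-t:ℕ):ℝ)/(n:ℝ)) * f Ostar - f Ostar := by
          rw [hcast]
          field_simp
          ring
        rw [harith]
        linarith [hA1, hA2]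
    _ = (1/(n.choose h : ℝ)) * ∑ H ∈ (univ : Finset α).powersetCard h,
          ((1/(h.choose t : ℝ)) * ∑ H' ∈ H.powersetCard t,
            (f (Ostar ∪ H') + f (Ostar \ (H \ H')) - f Ostar)) := EQ.symm
    _ ≤ (1/(n.choose h : ℝ)) * ∑ H ∈ (univ : Finset α).powersetCard h,
          surrogate f H t (Ostar \ H) := by
        refine mul_le_mul_of_nonneg_left (Finset.sum_le_sum fun H hH => ?_) (by positivity)
        rw [hsurr H hH]
        refine mul_le_mul_of_nonneg_left (Finset.sum_le_sum fun H' hH' => ?_) (by positivity)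
        exact ptw H hH H' hH'
    _ ≤ (1/(n.choose h : ℝ)) * ∑ H ∈ (univ : Finset α).powersetCard h,
          sSup {y : ℝ | ∃ S : Finset α, S ⊆ univ \ H ∧ y = surrogate f H t S} := by
        exact mul_le_mul_of_nonneg_left (Finset.sum_le_sum hsup) (by positivity)
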